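/- For any x_1, ..., x_{n−1} ∈ [0,1] and any indices 1 ≤ j_1 < i_2 < j_2 < ... < i_z < j_z ≤ n−1, the sum of the two quantities A = (1 − x_{j_1}) + ∑_{t=2}^{z}(x_{i_t} − x_{j_t}) and B = x_{j_1} + ∑_{t=2}^{z}(1 − x_{i_t} + x_{j_t}) + (n − 2z)/2 equals n/2; hence min{A, B'} ≤ n/4 where B' = ∑_{i=1}^{n−1} min{x_i, 1 − x_i} ≤ B. -/

import Mathlib

open Finset

/-- Combining the two rounding bounds. For `x 1, ..., x (n-1) ∈ [0,1]` and indices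
`1 ≤ j_1 < i_2 < j_2 < ... < i_z < j_z ≤ n - 1`, set
`A = (1 - x_{j_1}) + ∑_{t=2}^z (x_{i_t} - x_{j_t})` and
`B = x_{j_1} + ∑_{t=2}^z (1 - x_{i_t} + x_{j_t}) + (n - 2z)/2`.
Then `A + B = n/2`, `B' = ∑_{i=1}^{n-1} min{x_i, 1 - x_i} ≤ B`, and hence
`min{A, B'} ≤ n/4`. -/
theorem combining_two_roundings (n z : ℕ) (hn : 2 ≤ n) (hz : 1 ≤ z)
    (x : ℕ → ℝ) (I J : ℕ → ℕ)
    (hx : ∀ i, 1 ≤ i → i ≤ n - 1 → 0 ≤ x i ∧ x i ≤ 1)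
    (hJ1 : 1 ≤ J 1)
    (hIJ : ∀ t, 2 ≤ t → t ≤ z → J (t - 1) < I t ∧ I t < J t)
    (hJz : J z ≤ n - 1) :
    ((1 - x (J 1)) + ∑ t ∈ Finset.Icc 2 z, (x (I t) - x (J t))) +
        (x (J 1) + ∑ t ∈ Finset.Icc 2 z, (1 - x (I t) + x (J t)) +
          ((n : ℝ) - 2 * z) / 2) = (n : ℝ) / 2 ∧
      ∑ i ∈ Finset.Icc 1 (n - 1), min (x i) (1 - x i) ≤
        x (J 1) + ∑ t ∈ Finset.Icc 2 z, (1 - x (I t) + x (J t)) +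
          ((n : ℝ) - 2 * z) / 2 ∧
      min ((1 - x (J 1)) + ∑ t ∈ Finset.Icc 2 z, (x (I t) - x (J t)))
          (∑ i ∈ Finset.Icc 1 (n - 1), min (x i) (1 - x i)) ≤ (n : ℝ) / 4 := by
  -- J is strictly increasing along the chain
  have hJlt : ∀ t, t ≤ z → ∀ s, 1 ≤ s → s < t → J s < J t := by
    intro t
    induction t with
    | zero => intro _ s hs hst; omega
    | succ t ih =>
      intro hz' s hs hst
      have hIJt := hIJ (t + 1) (by omega) hz'
      have ht1 : (t + 1) - 1 = t := by omega
      rw [ht1] at hIJt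
      rcases Nat.lt_or_ge s t with h | h
      · have h1 : J s < J t := ih (by omega) s hs h
        omega
      · have : s = t := by omega
        subst this
        omega
  have hJI : ∀ s t, 1 ≤ s → 2 ≤ t → s < t → t ≤ z → J s < I t := by
    intro s t hs ht2 hst htz
    have hIJt := hIJ t ht2 htz
    rcases Nat.lt_or_ge s (t - 1) with h | h
    · have : J s < J (t - 1) := hJlt (t - 1) (by omega) s hs h
      omega
    · have : s = t - 1 := by omega
      subst this
      omega
  -- the sets of special indices
  set S1 : Finset ℕ := (Finset.Icc 1 z).image J with hS1
  set S2 : Finset ℕ := (Finset.Icc 2 z).image I with hS2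
  have hJinj : Set.InjOn J (Finset.Icc 1 z) := by
    intro a ha b hb hab
    simp only [coe_Icc, Set.mem_Icc] at ha hb
    by_contra hne
    rcases Nat.lt_or_ge a b with h | h
    · have := hJlt b hb.2 a ha.1 h; omega
    · have := hJlt a ha.2 b hb.1 (by omega); omega
  have hIinj : Set.InjOn I (Finset.Icc 2 z) := by
    intro a ha b hb hab
    simp only [coe_Icc, Set.mem_Icc] at ha hb
    by_contra hne
    rcases Nat.lt_or_ge a b with h | h
    · have h1 := (hIJ a ha.1 ha.2).2
      have h2 := hJI a b (by omega) hb.1 h hb.2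
      omega
    · have h1 := (hIJ b hb.1 hb.2).2
      have h2 := hJI b a (by omega) ha.1 (by omega) ha.2
      omega
  have hdisj : Disjoint S1 S2 := by
    rw [Finset.disjoint_left]
    intro a ha1 ha2
    simp only [hS1, hS2, Finset.mem_image, Finset.mem_Icc] at ha1 ha2
    obtain ⟨s, hs, hJs⟩ := ha1
    obtain ⟨t, ht, hIt⟩ := ha2
    rcases Nat.lt_trichotomy s t with h | h | h
    · have := hJI s t hs.1 ht.1 h ht.2; omega
    · subst h; have := (hIJ s ht.1 ht.2).2; omega
    · have h1 := (hIJ t ht.1 ht.2).2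
      have h2 : J t < J s := hJlt s hs.2 t (by omega) h
      omega
  -- all special indices lie in [1, n-1]
  have hJrange : ∀ t, 1 ≤ t → t ≤ z → 1 ≤ J t ∧ J t ≤ n - 1 := by
    intro t ht1 htz
    constructor
    · rcases Nat.eq_or_lt_of_le ht1 with h | h
      · rw [← h]; exact hJ1
      · have := hJlt t htz 1 le_rfl h; omega
    · rcases Nat.eq_or_lt_of_le htz with h | h
      · rw [h]; exact hJz
      · have := hJlt z le_rfl t ht1 h; omega
  have hIrange : ∀ t, 2 ≤ t → t ≤ z → 1 ≤ I t ∧ I t ≤ n - 1 := by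
    intro t ht2 htz
    have h1 := hJI 1 t le_rfl ht2 (by omega) htz
    have h2 := (hIJ t ht2 htz).2
    have h3 := (hJrange t (by omega) htz).2
    omega
  have hSsub : S1 ∪ S2 ⊆ Finset.Icc 1 (n - 1) := by
    intro a ha
    simp only [Finset.mem_union, hS1, hS2, Finset.mem_image, Finset.mem_Icc] at ha ⊢
    rcases ha with ⟨t, ht, rfl⟩ | ⟨t, ht, rfl⟩
    · exact hJrange t ht.1 ht.2
    · exact hIrange t ht.1 ht.2
  -- cardinalities
  have hcard1 : S1.card = z := by
    rw [hS1, Finset.card_image_of_injOn hJinj, Nat.card_Icc]; omega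
  have hcard2 : S2.card = z - 1 := by
    rw [hS2, Finset.card_image_of_injOn hIinj, Nat.card_Icc]; omega
  have hcardU : (S1 ∪ S2).card = 2 * z - 1 := by
    rw [Finset.card_union_of_disjoint hdisj, hcard1, hcard2]; omega
  have h2z : 2 * z ≤ n := by
    have := Finset.card_le_card hSsub
    rw [hcardU, Nat.card_Icc] at this
    omega
  -- sum over S1 and S2
  have hsum1 : ∑ i ∈ S1, x i = x (J 1) + ∑ t ∈ Finset.Icc 2 z, x (J t) := by
    rw [hS1, Finset.sum_image hJinj]
    have : Finset.Icc 1 z = insert 1 (Finset.Icc 2 z) := by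
      ext a; simp [Finset.mem_Icc]; omega
    rw [this, Finset.sum_insert (by simp)]
  have hsum2 : ∑ i ∈ S2, (1 - x i) = ∑ t ∈ Finset.Icc 2 z, (1 - x (I t)) := by
    rw [hS2, Finset.sum_image hIinj]
  -- the B expression
  have hB : x (J 1) + ∑ t ∈ Finset.Icc 2 z, (1 - x (I t) + x (J t)) +
      ((n : ℝ) - 2 * z) / 2 =
      (∑ i ∈ S1, x i) + (∑ i ∈ S2, (1 - x i)) +
        (((Finset.Icc 1 (n - 1)).card - (S1 ∪ S2).card : ℕ) : ℝ) * (1 / 2) := by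
    rw [hsum1, hsum2, Finset.sum_add_distrib]
    have : ((Finset.Icc 1 (n - 1)).card - (S1 ∪ S2).card : ℕ) = n - 2 * z := by
      rw [hcardU, Nat.card_Icc]; omega
    rw [this]
    have : ((n - 2 * z : ℕ) : ℝ) = (n : ℝ) - 2 * z := by
      push_cast [h2z]; ring
    rw [this]; ring
  -- part 2: the bound on B'
  have hBsplit : ∑ i ∈ Finset.Icc 1 (n - 1), min (x i) (1 - x i) =
      (∑ i ∈ (Finset.Icc 1 (n - 1)) \ (S1 ∪ S2), min (x i) (1 - x i)) +
      (∑ i ∈ S1 ∪ S2, min (x i) (1 - x i)) := Finset.sum_sdiff hSsub |>.symm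
  have hbound_sdiff : ∑ i ∈ (Finset.Icc 1 (n - 1)) \ (S1 ∪ S2), min (x i) (1 - x i) ≤
      (((Finset.Icc 1 (n - 1)).card - (S1 ∪ S2).card : ℕ) : ℝ) * (1 / 2) := by
    rw [← Finset.card_sdiff_of_subset (hSsub)]
    calc ∑ i ∈ (Finset.Icc 1 (n - 1)) \ (S1 ∪ S2), min (x i) (1 - x i)
        ≤ ∑ i ∈ (Finset.Icc 1 (n - 1)) \ (S1 ∪ S2), (1 / 2 : ℝ) := by
          apply Finset.sum_le_sum
          intro i hi
          have hi' := Finset.mem_sdiff.mp hi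
          have hx' := hx i (Finset.mem_Icc.mp hi'.1).1 (Finset.mem_Icc.mp hi'.1).2
          rcases le_total (x i) (1 - x i) with h | h
          · rw [min_eq_left h]; linarith
          · rw [min_eq_right h]; linarith
      _ = (((Finset.Icc 1 (n - 1)) \ (S1 ∪ S2)).card : ℝ) * (1 / 2) := by
          rw [Finset.sum_const, nsmul_eq_mul]
  have hbound_S : ∑ i ∈ S1 ∪ S2, min (x i) (1 - x i) ≤
      (∑ i ∈ S1, x i) + (∑ i ∈ S2, (1 - x i)) := by
    rw [Finset.sum_union hdisj]
    gcongr with i hi i hi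
    · exact min_le_left _ _
    · exact min_le_right _ _
  have part2 : ∑ i ∈ Finset.Icc 1 (n - 1), min (x i) (1 - x i) ≤
      x (J 1) + ∑ t ∈ Finset.Icc 2 z, (1 - x (I t) + x (J t)) +
        ((n : ℝ) - 2 * z) / 2 := by
    rw [hBsplit, hB]; linarith
  -- part 1
  have part1 : ((1 - x (J 1)) + ∑ t ∈ Finset.Icc 2 z, (x (I t) - x (J t))) +
      (x (J 1) + ∑ t ∈ Finset.Icc 2 z, (1 - x (I t) + x (J t)) +
        ((n : ℝ) - 2 * z) / 2) = (n : ℝ) / 2 := by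
    have hsum : ∑ t ∈ Finset.Icc 2 z, (x (I t) - x (J t)) +
        ∑ t ∈ Finset.Icc 2 z, (1 - x (I t) + x (J t)) = (z : ℝ) - 1 := by
      rw [← Finset.sum_add_distrib]
      have h1 : ∀ t ∈ Finset.Icc 2 z, (x (I t) - x (J t)) + (1 - x (I t) + x (J t)) = 1 := by
        intro t _; ring
      rw [Finset.sum_congr rfl h1, Finset.sum_const, Nat.card_Icc, nsmul_eq_mul]
      have h2 : ((z + 1 - 2 : ℕ) : ℝ) = (z : ℝ) - 1 := by
        have : z + 1 - 2 = z - 1 := by omega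
        rw [this]; push_cast [hz]; ring
      rw [h2]; ring
    linarith
  refine ⟨part1, part2, ?_⟩
  have h1 := min_le_left ((1 - x (J 1)) + ∑ t ∈ Finset.Icc 2 z, (x (I t) - x (J t)))
    (∑ i ∈ Finset.Icc 1 (n - 1), min (x i) (1 - x i))
  have h2 := min_le_right ((1 - x (J 1)) + ∑ t ∈ Finset.Icc 2 z, (x (I t) - x (J t)))
    (∑ i ∈ Finset.Icc 1 (n - 1), min (x i) (1 - x i))
  linarith
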